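/- The skew information of a quantum channel is independent of the Kraus representation: if {K_i}_{i=1}^n and {M_j}_{j=1}^m are two Kraus representations of the same channel Φ, related by M_j = ∑_i u_{ji} K_i for an isometry (u_{ji}), then ∑_i I_ρ(K_i) = ∑_j I_ρ(M_j). -/
import Mathlib


open Matrix BigOperators Finset ComplexOrder

noncomputable def WY {d : ℕ} (S K : Matrix (Fin d) (Fin d) ℂ) : ℝ :=
  (1/2 : ℝ) * ((S * K - K * S)ᴴ * (S * K - K * S)).trace.re

theorem wy_channel_kraus_independent {d n m : ℕ}
    (ρ S : Matrix (Fin d) (Fin d) ℂ)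
    (hρ : ρ.PosSemidef) (htr : ρ.trace = 1)
    (hS : S.PosSemidef) (hS2 : S * S = ρ)
    (K : Fin n → Matrix (Fin d) (Fin d) ℂ)
    (M : Fin m → Matrix (Fin d) (Fin d) ℂ)
    (u : Matrix (Fin m) (Fin n) ℂ)
    (hiso : uᴴ * u = 1)
    (hM : ∀ j, M j = ∑ i, u j i • K i) :
    ∑ i, WY S (K i) = ∑ j, WY S (M j) := by
  set C : Fin n → Matrix (Fin d) (Fin d) ℂ := fun i => S * K i - K i * S with hC
  have hD : ∀ j, S * M j - M j * S = ∑ i, u j i • C i := by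
    intro j
    simp only [hM, Finset.mul_sum, Finset.sum_mul, mul_smul_comm, smul_mul_assoc, hC, smul_sub]
    rw [← Finset.sum_sub_distrib]
  have key : ∑ j, ((S * M j - M j * S)ᴴ * (S * M j - M j * S)).trace
           = ∑ i, ((C i)ᴴ * (C i)).trace := by
    have h1 : ∀ j, ((S * M j - M j * S)ᴴ * (S * M j - M j * S)).trace
        = ∑ i, ∑ i', (star (u j i) * u j i') * ((C i)ᴴ * (C i')).trace := by
      intro j
      rw [hD j]
      rw [conjTranspose_sum]
      simp only [conjTranspose_smul, Finset.sum_mul, Finset.mul_sum, smul_mul_assoc,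
        mul_smul_comm, trace_sum, trace_smul, smul_smul, smul_eq_mul, RCLike.star_def]
      rw [Finset.sum_comm]
      exact Finset.sum_congr rfl fun _ _ => Finset.sum_congr rfl fun _ _ => by ring
    simp only [h1]
    rw [Finset.sum_comm]
    have h2 : ∀ i, ∑ j, ∑ i', (star (u j i) * u j i') * ((C i)ᴴ * (C i')).trace
        = ((C i)ᴴ * (C i)).trace := by
      intro i
      rw [Finset.sum_comm]
      have h3 : ∀ i', ∑ j, (star (u j i) * u j i') * ((C i)ᴴ * (C i')).trace
          = (if i = i' then 1 else 0) * ((C i)ᴴ * (C i')).trace := by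
        intro i'
        rw [← Finset.sum_mul]
        congr 1
        have := congrFun (congrFun hiso i) i'
        simpa [Matrix.mul_apply, Matrix.conjTranspose_apply, Matrix.one_apply] using this
      simp only [h3]
      simp [Finset.sum_ite_eq, Finset.mem_univ]
    simp only [h2]
  simp only [WY, ← Finset.mul_sum, ← Complex.re_sum]
  rw [key]
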